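/- arXiv:1509.04116 — 2 statements merged into one kernel-verified Lean document; each statement's English description precedes it below -/
import Mathlib

section
/- Let M=(S,A,Act,δ,ŝ) be a strongly connected MDP and Acc = ⋀_{i=1}^k Inf(S_i) ∧ ⋀_{j=1}^m MP^{inf}(⋈_j v_j, r_j) ∧ ⋀_{i=1}^n MP^{sup}(⋈'_i u_i, q_i) with n ≥ 1. If there exist a strategy σ and a measurable set R of runs with Pr^σ(R) > 0 such that every run in R satisfies Acc, then the linear constraint system L has a nonnegative solution (x_{i,a})_{1≤i≤n, a∈A}. -/
open Filter MeasureTheory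

attribute [local instance] Classical.propDecidable

noncomputable section

namespace Paper

/-- Comparison extremes: limit inferior or limit superior. -/
inductive Ext where
  | inf : Ext
  | sup : Ext

/-- Comparison operators `≥` and `>`. -/
inductive Cmp where
  | ge : Cmp
  | gt : Cmp

/-- Interpretation of a comparison operator on reals. -/
def Cmp.rel : Cmp → ℝ → ℝ → Prop
  | .ge, x, y => x ≥ y
  | .gt, x, y => x > y

/-- Cesàro averages of a real sequence. -/
def cesaro (q : ℕ → ℝ) (n : ℕ) : ℝ := (∑ j ∈ Finset.range n, q j) / (n : ℝ)

/-- `lr_inf`/`lr_sup`: liminf/limsup of the Cesàro averages. -/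
def lr : Ext → (ℕ → ℝ) → ℝ
  | .inf, q => Filter.liminf (cesaro q) Filter.atTop
  | .sup, q => Filter.limsup (cesaro q) Filter.atTop

/-- A Markov decision process with finite state space `S` and finite action
space `A`: enabled actions (nonempty in each state, each action enabled in
exactly one state), a probabilistic transition function, and an initial state. -/
structure MDP (S A : Type) [Fintype S] [Fintype A] where
  act : S → Finset A
  act_ne : ∀ s, (act s).Nonempty
  unique_src : ∀ a : A, ∃! s : S, a ∈ act s
  trans : A → PMF S
  init : S

variable {S A : Type} [Fintype S] [Fintype A]

/-- A strategy: given the history `(s₀a₀…s_{n-1}a_{n-1}, s_n)`, a distribution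
over actions, supported on the actions enabled in the current state. -/
structure Strategy (M : MDP S A) where
  choose : List (S × A) → S → PMF A
  supp : ∀ h s a, choose h s a ≠ 0 → a ∈ M.act s

/-- The space of runs `s₀a₀s₁a₁⋯` of an MDP. -/
abbrev RunSp (S A : Type) := ℕ → S × A

instance : MeasurableSpace (RunSp S A) :=
  @MeasurableSpace.pi ℕ (fun _ => S × A) (fun _ => ⊤)

/-- `P` is the probability measure on runs induced by the strategy `σ` from
the initial state `s₀`: it is a probability measure giving each cylinder set
its defining product probability. -/
def IsInduced (M : MDP S A) (σ : Strategy M) (s₀ : S) (P : Measure (RunSp S A)) : Prop :=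
  IsProbabilityMeasure P ∧
  ∀ (n : ℕ) (u : ℕ → S × A),
    P {ω : RunSp S A | ∀ i ≤ n, ω i = u i} =
      (if (u 0).1 = s₀ then 1 else 0) *
      (∏ i ∈ Finset.range (n + 1),
        σ.choose ((List.range i).map u) (u i).1 (u i).2) *
      (∏ i ∈ Finset.range n, M.trans (u i).2 (u (i + 1)).1)

/-- A generalized Büchi mean-payoff acceptance condition over states `S`:
a conjunction of `k` Büchi conditions, `m` limit-inferior mean-payoff
conditions and `n` limit-superior mean-payoff conditions. -/
structure GBMP (S : Type) where
  k : ℕ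
  m : ℕ
  n : ℕ
  buchi : Fin k → Set S
  cinf : Fin m → Cmp
  rinf : Fin m → S → ℚ
  vinf : Fin m → ℚ
  csup : Fin n → Cmp
  rsup : Fin n → S → ℚ
  vsup : Fin n → ℚ

/-- Satisfaction of a generalized Büchi mean-payoff condition on a run. -/
def GBMP.sat (acc : GBMP S) (ω : RunSp S A) : Prop :=
  (∀ i, {t : ℕ | (ω t).1 ∈ acc.buchi i}.Infinite) ∧
  (∀ j, (acc.cinf j).rel (lr .inf (fun t => (acc.rinf j (ω t).1 : ℝ))) (acc.vinf j : ℝ)) ∧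
  (∀ i, (acc.csup i).rel (lr .sup (fun t => (acc.rsup i (ω t).1 : ℝ))) (acc.vsup i : ℝ))

/-- One-step reachability: some enabled action moves from `s` to `t` with
positive probability. -/
def stepRel (M : MDP S A) (s t : S) : Prop :=
  ∃ a ∈ M.act s, M.trans a t ≠ 0

/-- A strongly connected MDP: every state can reach every state by a finite
path through enabled actions and positive-probability transitions. -/
def StronglyConnected (M : MDP S A) : Prop :=
  ∀ s t : S, Relation.ReflTransGen (stepRel M) s t

set_option linter.unusedSectionVars false

section Aux

variable {S A : Type} [Fintype S] [Fintype A]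

/-- Finite trajectories of length `n+1`. -/
abbrev Traj (S A : Type) (n : ℕ) := Fin (n + 1) → S × A

/-- Extension of a finite trajectory to an infinite run (junk after time `n`). -/
def extT {n : ℕ} (v : Traj S A n) : RunSp S A :=
  fun i => if h : i < n + 1 then v ⟨i, h⟩ else v ⟨n, n.lt_succ_self⟩

lemma extT_eq {n : ℕ} (v : Traj S A n) {i : ℕ} (h : i ≤ n) :
    extT v i = v ⟨i, Nat.lt_succ_of_le h⟩ := by
  simp [extT, Nat.lt_succ_of_le h]

/-- The cylinder set of a finite trajectory. -/
def cylT {n : ℕ} (v : Traj S A n) : Set (RunSp S A) :=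
  {ω | ∀ i ≤ n, ω i = extT v i}

lemma mem_cylT {n : ℕ} {v : Traj S A n} {ω : RunSp S A} :
    ω ∈ cylT v ↔ ∀ i : Fin (n + 1), ω i = v i := by
  constructor
  · intro h i
    have := h i (Nat.lt_succ_iff.mp i.isLt)
    rwa [extT_eq v (Nat.lt_succ_iff.mp i.isLt)] at this
  · intro h i hi
    rw [extT_eq v hi]
    exact h ⟨i, Nat.lt_succ_of_le hi⟩

lemma measurableSet_cylT {n : ℕ} (v : Traj S A n) : MeasurableSet (cylT v) := by
  have : cylT v = ⋂ i : Fin (n+1), {ω : RunSp S A | ω i = v i} := by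
    ext ω; simp [mem_cylT, Set.mem_iInter, Set.mem_setOf_eq]
  rw [this]
  refine MeasurableSet.iInter fun i => ?_
  have hm : @Measurable _ _ _ ⊤ (fun ω : RunSp S A => ω (i : ℕ)) :=
    @measurable_pi_apply ℕ (fun _ => S × A) (fun _ => ⊤) (i : ℕ)
  have : {ω : RunSp S A | ω (i : ℕ) = v i} =
      (fun ω : RunSp S A => ω (i : ℕ)) ⁻¹' {v i} := rfl
  rw [this]
  exact hm MeasurableSpace.measurableSet_top

lemma cylT_disjoint {n : ℕ} {v w : Traj S A n} (hvw : v ≠ w) :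
    Disjoint (cylT v) (cylT w) := by
  rw [Set.disjoint_left]
  intro ω hv hw
  exact hvw (funext fun i => ((mem_cylT.mp hv i).symm.trans (mem_cylT.mp hw i)))

lemma iUnion_cylT (n : ℕ) : (⋃ v : Traj S A n, cylT v) = Set.univ := by
  ext ω
  simp only [Set.mem_iUnion, Set.mem_univ, iff_true]
  exact ⟨fun i => ω i, mem_cylT.mpr fun i => rfl⟩

end Aux

section Prob

variable {S A : Type} [Fintype S] [Fintype A] {M : MDP S A} {σ : Strategy M}
  {P : Measure (RunSp S A)}

/-- The probability of a cylinder according to the product formula. -/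
def Phi (M : MDP S A) (σ : Strategy M) (n : ℕ) (u : ℕ → S × A) : ENNReal :=
  (if (u 0).1 = M.init then 1 else 0) *
    (∏ i ∈ Finset.range (n + 1),
      σ.choose ((List.range i).map u) (u i).1 (u i).2) *
    (∏ i ∈ Finset.range n, M.trans (u i).2 (u (i + 1)).1)

lemma P_cylT (hP : IsInduced M σ M.init P) {n : ℕ} (v : Traj S A n) :
    P (cylT v) = Phi M σ n (extT v) :=
  hP.2 n (extT v)

lemma Phi_congr {n : ℕ} {u u' : ℕ → S × A} (h : ∀ i ≤ n, u i = u' i) :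
    Phi M σ n u = Phi M σ n u' := by
  unfold Phi
  rw [h 0 (Nat.zero_le n)]
  congr 1
  · congr 1
    refine Finset.prod_congr rfl fun i hi => ?_
    have hin : i ≤ n := Nat.lt_succ_iff.mp (Finset.mem_range.mp hi)
    have hl : (List.range i).map u = (List.range i).map u' := by
      refine List.map_congr_left fun j hj => h j ?_
      exact le_trans (Nat.le_of_lt (List.mem_range.mp hj)) hin
    rw [hl, h i hin]
  · refine Finset.prod_congr rfl fun i hi => ?_
    have hin : i < n := Finset.mem_range.mp hi
    rw [h i (le_of_lt hin), h (i+1) hin]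

lemma Phi_succ (n : ℕ) (u : ℕ → S × A) :
    Phi M σ (n + 1) u =
      Phi M σ n u * σ.choose ((List.range (n+1)).map u) (u (n+1)).1 (u (n+1)).2 *
        M.trans (u n).2 (u (n+1)).1 := by
  unfold Phi
  rw [Finset.prod_range_succ (fun i => σ.choose ((List.range i).map u) (u i).1 (u i).2) (n+1),
    Finset.prod_range_succ (fun i => M.trans (u i).2 (u (i+1)).1) n]
  ring

/-- Real-valued cylinder probability. -/
def prT (P : Measure (RunSp S A)) {n : ℕ} (v : Traj S A n) : ℝ := (P (cylT v)).toReal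

lemma prT_nonneg {n : ℕ} (v : Traj S A n) : 0 ≤ prT P v := ENNReal.toReal_nonneg

/-- The history list of a finite trajectory. -/
def histT {n : ℕ} (v : Traj S A n) : List (S × A) := (List.range (n+1)).map (extT v)

lemma extT_snoc_le {n : ℕ} (w : Traj S A n) (p : S × A) {i : ℕ} (h : i ≤ n) :
    extT (Fin.snoc w p : Traj S A (n+1)) i = extT w i := by
  rw [extT_eq _ (le_trans h (Nat.le_succ n)), extT_eq _ h]
  have : (⟨i, Nat.lt_succ_of_le (le_trans h (Nat.le_succ n))⟩ : Fin (n+2)) =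
      Fin.castSucc ⟨i, Nat.lt_succ_of_le h⟩ := rfl
  rw [this, Fin.snoc_castSucc]

lemma extT_snoc_last {n : ℕ} (w : Traj S A n) (p : S × A) :
    extT (Fin.snoc w p : Traj S A (n+1)) (n+1) = p := by
  rw [extT_eq _ (le_refl (n+1))]
  exact Fin.snoc_last (α := fun _ => S × A) p w

lemma P_cylT_snoc (hP : IsInduced M σ M.init P) {n : ℕ} (w : Traj S A n) (p : S × A) :
    P (cylT (Fin.snoc w p : Traj S A (n+1))) =
      P (cylT w) * σ.choose (histT w) p.1 p.2 *
        M.trans (w (Fin.last n)).2 p.1 := by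
  rw [P_cylT hP, P_cylT hP, Phi_succ]
  have h1 : Phi M σ n (extT (Fin.snoc w p : Traj S A (n+1))) = Phi M σ n (extT w) :=
    Phi_congr fun i hi => extT_snoc_le w p hi
  have h2 : (List.range (n+1)).map (extT (Fin.snoc w p : Traj S A (n+1))) = histT w := by
    unfold histT
    refine List.map_congr_left fun j hj => ?_
    exact extT_snoc_le w p (Nat.lt_succ_iff.mp (List.mem_range.mp hj))
  have h3 : extT (Fin.snoc w p : Traj S A (n+1)) (n+1) = p := extT_snoc_last w p
  have h4 : extT (Fin.snoc w p : Traj S A (n+1)) n = w (Fin.last n) := by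
    rw [extT_snoc_le w p (le_refl n), extT_eq _ (le_refl n)]; rfl
  rw [h1, h2, h3, h4]

lemma prT_snoc (hP : IsInduced M σ M.init P) {n : ℕ} (w : Traj S A n) (p : S × A) :
    prT P (Fin.snoc w p : Traj S A (n+1)) =
      prT P w * (σ.choose (histT w) p.1 p.2).toReal *
        (M.trans (w (Fin.last n)).2 p.1).toReal := by
  unfold prT
  rw [P_cylT_snoc hP, ENNReal.toReal_mul, ENNReal.toReal_mul]

end Prob

section Expect

variable {S A : Type} [Fintype S] [Fintype A] {M : MDP S A} {σ : Strategy M}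
  {P : Measure (RunSp S A)}

lemma sum_pmf_toReal {α : Type} [Fintype α] (p : PMF α) :
    ∑ a : α, (p a).toReal = 1 := by
  have h : ∑ a : α, p a = 1 := by
    rw [← tsum_fintype (L := SummationFilter.unconditional α)]; exact p.tsum_coe
  have := ENNReal.toReal_sum (s := Finset.univ) (f := fun a : α => p a)
    (fun a _ => p.apply_ne_top a)
  rw [h] at this
  simpa using this.symm

/-- Sum over trajectories of length `n+2` as a double sum via `Fin.snoc`. -/
lemma sum_traj_succ {n : ℕ} (F : Traj S A (n+1) → ℝ) :
    ∑ v : Traj S A (n+1), F v =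
      ∑ w : Traj S A n, ∑ p : S × A, F (Fin.snoc w p) := by
  rw [← Finset.sum_product']
  refine (Fintype.sum_bijective (fun wp : Traj S A n × (S × A) => (Fin.snoc wp.1 wp.2 : Traj S A (n+1))) ?_ _ _ fun wp => rfl).symm
  constructor
  · intro a b hab
    have h1 : a.1 = b.1 := by
      have := congrArg Fin.init hab
      rwa [Fin.init_snoc, Fin.init_snoc] at this
    have h2 : a.2 = b.2 := by
      have := congrArg (fun f => f (Fin.last (n+1))) hab
      simpa [Fin.snoc_last] using this
    exact Prod.ext h1 h2
  · intro v
    exact ⟨(Fin.init v, v (Fin.last (n+1))), Fin.snoc_init_self v⟩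

/-- Expectation of a finite-horizon function. -/
def EE (P : Measure (RunSp S A)) (n : ℕ) (G : RunSp S A → ℝ) : ℝ :=
  ∑ v : Traj S A n, G (extT v) * prT P v

/-- `G` depends only on coordinates `≤ n`. -/
def DepOn (n : ℕ) (G : RunSp S A → ℝ) : Prop :=
  ∀ ω ω' : RunSp S A, (∀ i ≤ n, ω i = ω' i) → G ω = G ω'

lemma EE_mono {n : ℕ} {G H : RunSp S A → ℝ} (h : ∀ ω, G ω ≤ H ω) :
    EE P n G ≤ EE P n H :=
  Finset.sum_le_sum fun v _ => mul_le_mul_of_nonneg_right (h _) (prT_nonneg v)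

lemma EE_add {n : ℕ} (G H : RunSp S A → ℝ) :
    EE P n (fun ω => G ω + H ω) = EE P n G + EE P n H := by
  unfold EE
  rw [← Finset.sum_add_distrib]
  exact Finset.sum_congr rfl fun v _ => by ring

lemma EE_const_mul {n : ℕ} (c : ℝ) (G : RunSp S A → ℝ) :
    EE P n (fun ω => c * G ω) = c * EE P n G := by
  unfold EE
  rw [Finset.mul_sum]
  exact Finset.sum_congr rfl fun v _ => by ring

lemma EE_one (hP : IsInduced M σ M.init P) (n : ℕ) :
    EE P n (fun _ => 1) = 1 := by
  have hdis : ∀ v ∈ (Finset.univ : Finset (Traj S A n)), ∀ w ∈ Finset.univ,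
      v ≠ w → Disjoint (cylT v) (cylT w) := fun v _ w _ h => cylT_disjoint h
  have hU : P (⋃ v ∈ (Finset.univ : Finset (Traj S A n)), cylT v) =
      ∑ v : Traj S A n, P (cylT v) :=
    measure_biUnion_finset hdis fun v _ => measurableSet_cylT v
  have hUu : (⋃ v ∈ (Finset.univ : Finset (Traj S A n)), cylT v) = Set.univ := by
    simpa using iUnion_cylT (S := S) (A := A) n
  have hprob : IsProbabilityMeasure P := hP.1
  have h1 : ∑ v : Traj S A n, P (cylT v) = 1 := by
    rw [← hU, hUu, measure_univ]
  unfold EE prT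
  have := ENNReal.toReal_sum (s := Finset.univ) (f := fun v : Traj S A n => P (cylT v))
    (fun v _ => (measure_ne_top P _))
  rw [h1] at this
  simp only [one_mul]
  simpa using this.symm

lemma EE_nonneg {n : ℕ} {G : RunSp S A → ℝ} (h : ∀ ω, 0 ≤ G ω) : 0 ≤ EE P n G :=
  Finset.sum_nonneg fun v _ => mul_nonneg (h _) (prT_nonneg v)

lemma EE_le_one (hP : IsInduced M σ M.init P) {n : ℕ} {G : RunSp S A → ℝ}
    (h : ∀ ω, G ω ≤ 1) : EE P n G ≤ 1 := by
  calc EE P n G ≤ EE P n (fun _ => 1) := EE_mono h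
  _ = 1 := EE_one hP n

/-- Tower property: expectation of a function of horizon `n` computed at `n+1`. -/
lemma EE_succ_depOn (hP : IsInduced M σ M.init P) {n : ℕ} {G : RunSp S A → ℝ}
    (hG : DepOn n G) : EE P (n+1) G = EE P n G := by
  unfold EE
  rw [sum_traj_succ (fun v => G (extT v) * prT P v)]
  refine Finset.sum_congr rfl fun w _ => ?_
  have hGs : ∀ p : S × A, G (extT (Fin.snoc w p : Traj S A (n+1))) = G (extT w) :=
    fun p => hG _ _ fun i hi => extT_snoc_le w p hi
  calc ∑ p : S × A, G (extT (Fin.snoc w p : Traj S A (n+1))) *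
        prT P (Fin.snoc w p : Traj S A (n+1))
      = ∑ p : S × A, G (extT w) * prT P w *
          ((σ.choose (histT w) p.1 p.2).toReal *
            (M.trans (w (Fin.last n)).2 p.1).toReal) := by
        refine Finset.sum_congr rfl fun p _ => ?_
        rw [hGs p, prT_snoc hP]; ring
  _ = G (extT w) * prT P w := by
        rw [← Finset.mul_sum]
        have : ∑ p : S × A, (σ.choose (histT w) p.1 p.2).toReal *
            (M.trans (w (Fin.last n)).2 p.1).toReal = 1 := by
          rw [Fintype.sum_prod_type]
          have : ∀ s : S, ∑ a : A, (σ.choose (histT w) s a).toReal *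
              (M.trans (w (Fin.last n)).2 s).toReal =
              (M.trans (w (Fin.last n)).2 s).toReal := by
            intro s
            rw [← Finset.sum_mul, sum_pmf_toReal, one_mul]
          rw [Finset.sum_congr rfl fun s _ => this s]
          exact sum_pmf_toReal _
        rw [this, mul_one]

/-- One-step martingale difference at time `t`. -/
def dZ (M : MDP S A) (s : S) (t : ℕ) (ω : RunSp S A) : ℝ :=
  (if (ω (t+1)).1 = s then 1 else 0) - (M.trans (ω t).2 s).toReal

/-- Centering: the expectation of `G · dZ` vanishes when `G` has horizon `n`. -/
lemma EE_mul_dZ (hP : IsInduced M σ M.init P) {n : ℕ} {G : RunSp S A → ℝ}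
    (hG : DepOn n G) (s : S) :
    EE P (n+1) (fun ω => G ω * dZ M s n ω) = 0 := by
  unfold EE
  rw [sum_traj_succ (fun v => (G (extT v) * dZ M s n (extT v)) * prT P v)]
  rw [Finset.sum_eq_zero]
  intro w _
  have hGs : ∀ p : S × A, G (extT (Fin.snoc w p : Traj S A (n+1))) = G (extT w) :=
    fun p => hG _ _ fun i hi => extT_snoc_le w p hi
  have hlast : ∀ p : S × A, extT (Fin.snoc w p : Traj S A (n+1)) (n+1) = p :=
    fun p => extT_snoc_last w p
  have hn : ∀ p : S × A, extT (Fin.snoc w p : Traj S A (n+1)) n = w (Fin.last n) := by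
    intro p
    rw [extT_snoc_le w p (le_refl n), extT_eq _ (le_refl n)]; rfl
  calc ∑ p : S × A, (G (extT (Fin.snoc w p : Traj S A (n+1))) *
        dZ M s n (extT (Fin.snoc w p : Traj S A (n+1)))) *
        prT P (Fin.snoc w p : Traj S A (n+1))
      = G (extT w) * prT P w *
        ∑ p : S × A, ((if p.1 = s then 1 else 0) -
            (M.trans (w (Fin.last n)).2 s).toReal) *
          ((σ.choose (histT w) p.1 p.2).toReal *
            (M.trans (w (Fin.last n)).2 p.1).toReal) := by
        rw [Finset.mul_sum]
        refine Finset.sum_congr rfl fun p _ => ?_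
        rw [hGs p, prT_snoc hP]
        unfold dZ
        rw [hlast p, hn p]
        ring
  _ = 0 := by
        have hz : ∑ p : S × A, ((if p.1 = s then 1 else 0) -
            (M.trans (w (Fin.last n)).2 s).toReal) *
          ((σ.choose (histT w) p.1 p.2).toReal *
            (M.trans (w (Fin.last n)).2 p.1).toReal) = 0 := by
          rw [Fintype.sum_prod_type]
          have hrow : ∀ s' : S, ∑ a : A, ((if s' = s then (1:ℝ) else 0) -
              (M.trans (w (Fin.last n)).2 s).toReal) *
            ((σ.choose (histT w) s' a).toReal *
              (M.trans (w (Fin.last n)).2 s').toReal) =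
            ((if s' = s then (1:ℝ) else 0) - (M.trans (w (Fin.last n)).2 s).toReal) *
              (M.trans (w (Fin.last n)).2 s').toReal := by
            intro s'
            rw [← Finset.mul_sum, ← Finset.sum_mul, sum_pmf_toReal, one_mul]
          rw [Finset.sum_congr rfl fun s' _ => hrow s']
          set c := (M.trans (w (Fin.last n)).2 s).toReal with hc
          set t := fun s' : S => (M.trans (w (Fin.last n)).2 s').toReal with ht
          have hsplit : ∀ s' : S, ((if s' = s then (1:ℝ) else 0) - c) * t s' =
              (if s' = s then t s' else 0) - c * t s' := by
            intro s'; by_cases h : s' = s <;> simp [h] <;> ring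
          rw [Finset.sum_congr rfl fun s' _ => hsplit s', Finset.sum_sub_distrib,
            Finset.sum_ite_eq' Finset.univ s t, ← Finset.mul_sum]
          have : ∑ s' : S, t s' = 1 := sum_pmf_toReal _
          simp [this, hc]
          exact sub_self _
        rw [hz, mul_zero]

end Expect

section Moments

variable {S A : Type} [Fintype S] [Fintype A] {M : MDP S A} {σ : Strategy M}
  {P : Measure (RunSp S A)}

/-- Martingale sums of one-step differences. -/
def zsum (M : MDP S A) (s : S) (T : ℕ) (ω : RunSp S A) : ℝ :=
  ∑ t ∈ Finset.range T, dZ M s t ω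

lemma zsum_succ (s : S) (T : ℕ) (ω : RunSp S A) :
    zsum M s (T+1) ω = zsum M s T ω + dZ M s T ω := by
  unfold zsum
  rw [Finset.sum_range_succ]

lemma trans_toReal_nonneg (a : A) (s : S) : 0 ≤ (M.trans a s).toReal :=
  ENNReal.toReal_nonneg

lemma trans_toReal_le_one (a : A) (s : S) : (M.trans a s).toReal ≤ 1 := by
  have h := (M.trans a).coe_le_one s
  have := ENNReal.toReal_mono (by simp) h
  simpa using this

lemma abs_dZ_le (s : S) (t : ℕ) (ω : RunSp S A) : |dZ M s t ω| ≤ 1 := by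
  unfold dZ
  rw [abs_le]
  constructor
  · have h1 : (0:ℝ) ≤ if (ω (t+1)).1 = s then 1 else 0 := by positivity
    have h2 := trans_toReal_le_one (M := M) (ω t).2 s
    linarith
  · have h1 : (if (ω (t+1)).1 = s then (1:ℝ) else 0) ≤ 1 := by
      split <;> norm_num
    have h2 := trans_toReal_nonneg (M := M) (ω t).2 s
    linarith

lemma depOn_zsum (s : S) (T : ℕ) : DepOn T (zsum M s T) := by
  intro ω ω' h
  unfold zsum
  refine Finset.sum_congr rfl fun t ht => ?_
  have ht' : t < T := Finset.mem_range.mp ht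
  unfold dZ
  rw [h t (le_of_lt ht'), h (t+1) ht']

lemma DepOn.pow {n : ℕ} {G : RunSp S A → ℝ} (hG : DepOn n G) (k : ℕ) :
    DepOn n (fun ω => G ω ^ k) := fun ω ω' h => by simp only []; rw [hG ω ω' h]

lemma EE_zero (n : ℕ) : EE P n (fun _ => (0:ℝ)) = 0 := by
  unfold EE; simp

lemma EE_zsum_sq_le (hP : IsInduced M σ M.init P) (s : S) :
    ∀ T : ℕ, EE P T (fun ω => zsum M s T ω ^ 2) ≤ T := by
  intro T
  induction T with
  | zero =>
    have : (fun ω : RunSp S A => zsum M s 0 ω ^ 2) = fun _ => (0:ℝ) := by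
      funext ω; simp [zsum]
    rw [this, EE_zero]; simp
  | succ T ih =>
    have hexp : (fun ω : RunSp S A => zsum M s (T+1) ω ^ 2) =
        fun ω => zsum M s T ω ^ 2 + ((2:ℝ) * (zsum M s T ω ^ 1 * dZ M s T ω) +
          dZ M s T ω ^ 2) := by
      funext ω; rw [zsum_succ]; ring
    rw [hexp, EE_add, EE_add, EE_const_mul]
    have h1 : EE P (T+1) (fun ω => zsum M s T ω ^ 2) ≤ T := by
      rw [EE_succ_depOn hP ((depOn_zsum s T).pow 2)]; exact ih
    have h2 : EE P (T+1) (fun ω => zsum M s T ω ^ 1 * dZ M s T ω) = 0 :=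
      EE_mul_dZ hP ((depOn_zsum s T).pow 1) s
    have h3 : EE P (T+1) (fun ω => dZ M s T ω ^ 2) ≤ 1 := by
      refine EE_le_one hP fun ω => ?_
      have := abs_dZ_le (M := M) s T ω
      nlinarith [abs_nonneg (dZ M s T ω), sq_abs (dZ M s T ω)]
    rw [h2]
    push_cast
    linarith

lemma EE_zsum_pow4_le (hP : IsInduced M σ M.init P) (s : S) :
    ∀ T : ℕ, EE P T (fun ω => zsum M s T ω ^ 4) ≤ 4 * (T:ℝ)^2 := by
  intro T
  induction T with
  | zero =>
    have : (fun ω : RunSp S A => zsum M s 0 ω ^ 4) = fun _ => (0:ℝ) := by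
      funext ω; simp [zsum]
    rw [this, EE_zero]; simp
  | succ T ih =>
    have hexp : (fun ω : RunSp S A => zsum M s (T+1) ω ^ 4) =
        fun ω => zsum M s T ω ^ 4 + ((4:ℝ) * (zsum M s T ω ^ 3 * dZ M s T ω) +
          ((6:ℝ) * (zsum M s T ω ^ 2 * dZ M s T ω ^ 2) +
            ((4:ℝ) * (zsum M s T ω ^ 1 * dZ M s T ω ^ 3) + dZ M s T ω ^ 4))) := by
      funext ω; rw [zsum_succ]; ring
    rw [hexp, EE_add, EE_add, EE_add, EE_add, EE_const_mul, EE_const_mul, EE_const_mul]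
    have habs : ∀ (ω : RunSp S A) (t : ℕ), dZ M s t ω ^ 2 ≤ 1 := by
      intro ω t
      have := abs_dZ_le (M := M) s t ω
      nlinarith [abs_nonneg (dZ M s t ω), sq_abs (dZ M s t ω)]
    have h1 : EE P (T+1) (fun ω => zsum M s T ω ^ 4) ≤ 4 * (T:ℝ)^2 := by
      rw [EE_succ_depOn hP ((depOn_zsum s T).pow 4)]; exact ih
    have h3 : EE P (T+1) (fun ω => zsum M s T ω ^ 3 * dZ M s T ω) = 0 :=
      EE_mul_dZ hP ((depOn_zsum s T).pow 3) s
    have hsqT : EE P (T+1) (fun ω => zsum M s T ω ^ 2) ≤ T := by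
      rw [EE_succ_depOn hP ((depOn_zsum s T).pow 2)]
      exact EE_zsum_sq_le hP s T
    have h4 : EE P (T+1) (fun ω => zsum M s T ω ^ 2 * dZ M s T ω ^ 2) ≤ T := by
      refine le_trans (EE_mono fun ω => ?_) hsqT
      have h := habs ω T
      nlinarith [sq_nonneg (zsum M s T ω)]
    have hhalf : EE P (T+1) (fun ω => ((1:ℝ)/2) * (zsum M s T ω ^ 2 + 1)) ≤
        ((T:ℝ) + 1) / 2 := by
      rw [EE_const_mul, EE_add, EE_one hP]
      linarith
    have hptw : ∀ ω : RunSp S A, |zsum M s T ω ^ 1 * dZ M s T ω ^ 3| ≤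
        ((1:ℝ)/2) * (zsum M s T ω ^ 2 + 1) := by
      intro ω
      have hd := abs_dZ_le (M := M) s T ω
      have hd0 := abs_nonneg (dZ M s T ω)
      have hz0 := abs_nonneg (zsum M s T ω)
      have habs3 : |dZ M s T ω ^ 3| ≤ 1 := by
        rw [abs_pow]; exact pow_le_one₀ hd0 hd
      have : |zsum M s T ω ^ 1 * dZ M s T ω ^ 3| = |zsum M s T ω| * |dZ M s T ω ^ 3| := by
        rw [pow_one, abs_mul]
      rw [this]
      nlinarith [sq_abs (zsum M s T ω), sq_nonneg (|zsum M s T ω| - 1),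
        abs_nonneg (dZ M s T ω ^ 3)]
    have h5u : EE P (T+1) (fun ω => zsum M s T ω ^ 1 * dZ M s T ω ^ 3) ≤ ((T:ℝ)+1)/2 := by
      refine le_trans (EE_mono fun ω => ?_) hhalf
      exact le_trans (le_abs_self _) (hptw ω)
    have h5l : -(((T:ℝ)+1)/2) ≤ EE P (T+1) (fun ω => zsum M s T ω ^ 1 * dZ M s T ω ^ 3) := by
      have : EE P (T+1) (fun ω => -(((1:ℝ)/2) * (zsum M s T ω ^ 2 + 1))) ≤
          EE P (T+1) (fun ω => zsum M s T ω ^ 1 * dZ M s T ω ^ 3) := by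
        refine EE_mono fun ω => ?_
        have := hptw ω
        have := neg_abs_le (zsum M s T ω ^ 1 * dZ M s T ω ^ 3)
        linarith
      have hneg : EE P (T+1) (fun ω => -(((1:ℝ)/2) * (zsum M s T ω ^ 2 + 1))) =
          -EE P (T+1) (fun ω => ((1:ℝ)/2) * (zsum M s T ω ^ 2 + 1)) := by
        have : (fun ω : RunSp S A => -(((1:ℝ)/2) * (zsum M s T ω ^ 2 + 1))) =
            fun ω => (-1:ℝ) * (((1:ℝ)/2) * (zsum M s T ω ^ 2 + 1)) := by
          funext ω; ring
        rw [this, EE_const_mul]; ring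
      rw [hneg] at this
      linarith
    have h6 : EE P (T+1) (fun ω => dZ M s T ω ^ 4) ≤ 1 := by
      refine EE_le_one hP fun ω => ?_
      have h := habs ω T
      have h0 : (0:ℝ) ≤ dZ M s T ω ^ 2 := sq_nonneg _
      nlinarith
    rw [h3]
    push_cast
    nlinarith [h5u, h5l]

end Moments

section BC

variable {S A : Type} [Fintype S] [Fintype A] {M : MDP S A} {σ : Strategy M}
  {P : Measure (RunSp S A)}

lemma event_eq_biUnion (s : S) {ε : ℝ} (T : ℕ) :
    {ω : RunSp S A | ε * T ≤ |zsum M s T ω|} =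
      ⋃ v ∈ Finset.univ.filter (fun v : Traj S A T => ε * T ≤ |zsum M s T (extT v)|),
        cylT v := by
  ext ω
  simp only [Set.mem_setOf_eq, Set.mem_iUnion, Finset.mem_filter, Finset.mem_univ,
    true_and, exists_prop]
  constructor
  · intro h
    refine ⟨fun i : Fin (T+1) => ω i, ?_, mem_cylT.mpr fun i => rfl⟩
    have hagree : ∀ i ≤ T, extT (fun i : Fin (T+1) => ω i) i = ω i := by
      intro i hi; rw [extT_eq _ hi]
    rwa [depOn_zsum s T _ ω hagree]
  · rintro ⟨v, hv, hcyl⟩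
    have : zsum M s T ω = zsum M s T (extT v) := depOn_zsum s T _ _ hcyl
    rwa [this]

lemma P_cheb (hP : IsInduced M σ M.init P) (s : S) {ε : ℝ} (hε : 0 < ε)
    {T : ℕ} (hT : 1 ≤ T) :
    P {ω : RunSp S A | ε * T ≤ |zsum M s T ω|} ≤
      ENNReal.ofReal (4 / (ε^4 * T^2)) := by
  haveI : IsProbabilityMeasure P := hP.1
  set F := Finset.univ.filter (fun v : Traj S A T => ε * T ≤ |zsum M s T (extT v)|) with hF
  rw [event_eq_biUnion s T, ← hF]
  have hPU : P (⋃ v ∈ F, cylT v) = ∑ v ∈ F, P (cylT v) :=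
    measure_biUnion_finset (fun v _ w _ h => cylT_disjoint h) fun v _ => measurableSet_cylT v
  rw [hPU]
  have hofReal : ∀ v : Traj S A T, P (cylT v) = ENNReal.ofReal (prT P v) := by
    intro v
    rw [prT, ENNReal.ofReal_toReal (measure_ne_top P _)]
  rw [Finset.sum_congr rfl fun v _ => hofReal v,
    ← ENNReal.ofReal_sum_of_nonneg fun v _ => prT_nonneg v]
  refine ENNReal.ofReal_le_ofReal ?_
  have hT0 : (0:ℝ) < T := by exact_mod_cast hT
  have hc : (0:ℝ) < (ε * T)^4 := by positivity
  have hkey : ∑ v ∈ F, prT P v ≤ EE P T (fun ω => zsum M s T ω ^ 4) / (ε * T)^4 := by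
    have h1 : ∀ v ∈ F, prT P v ≤ zsum M s T (extT v) ^ 4 / (ε * T)^4 * prT P v := by
      intro v hv
      have hzv : ε * T ≤ |zsum M s T (extT v)| := (Finset.mem_filter.mp hv).2
      have h4 : (ε * T)^4 ≤ zsum M s T (extT v) ^ 4 := by
        calc (ε * T)^4 ≤ |zsum M s T (extT v)|^4 := by
              exact pow_le_pow_left₀ (by positivity) hzv 4
        _ = zsum M s T (extT v) ^ 4 := by
              rw [← abs_pow, abs_of_nonneg (by positivity)]
      have : (1:ℝ) ≤ zsum M s T (extT v) ^ 4 / (ε * T)^4 :=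
        (one_le_div hc).mpr h4
      nlinarith [prT_nonneg (P := P) v]
    calc ∑ v ∈ F, prT P v ≤ ∑ v ∈ F, zsum M s T (extT v) ^ 4 / (ε * T)^4 * prT P v :=
          Finset.sum_le_sum h1
    _ ≤ ∑ v : Traj S A T, zsum M s T (extT v) ^ 4 / (ε * T)^4 * prT P v := by
          refine Finset.sum_le_sum_of_subset_of_nonneg (Finset.filter_subset _ _) ?_
          intro v _ _
          have := prT_nonneg (P := P) v
          positivity
    _ = EE P T (fun ω => zsum M s T ω ^ 4) / (ε * T)^4 := by
          unfold EE
          rw [Finset.sum_div]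
          exact Finset.sum_congr rfl fun v _ => by ring
  have hEE := EE_zsum_pow4_le hP s T
  calc ∑ v ∈ F, prT P v ≤ EE P T (fun ω => zsum M s T ω ^ 4) / (ε * T)^4 := hkey
  _ ≤ 4 * (T:ℝ)^2 / (ε * T)^4 := by gcongr
  _ = 4 / (ε^4 * T^2) := by
        field_simp

lemma null_limsup_zsum (hP : IsInduced M σ M.init P) (s : S) {ε : ℝ} (hε : 0 < ε) :
    P (Filter.limsup
        (fun T : ℕ => {ω : RunSp S A | ε * ((T:ℝ)+1) ≤ |zsum M s (T+1) ω|}) atTop) = 0 := by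
  refine MeasureTheory.measure_limsup_atTop_eq_zero ?_
  have hsum : Summable (fun T : ℕ => 4 / (ε^4 * ((T:ℝ)+1)^2)) := by
    have h0 : Summable (fun n : ℕ => 1 / ((n:ℝ))^2) :=
      Real.summable_one_div_nat_pow.mpr (by norm_num)
    have h1 : Summable (fun n : ℕ => 1 / (((n:ℝ))+1)^2) := by
      have := (summable_nat_add_iff 1).mpr h0
      simpa [add_comm] using this
    have := h1.mul_left (4 / ε^4)
    refine this.congr fun n => ?_
    field_simp
  have hbound : ∀ T : ℕ, P {ω : RunSp S A | ε * ((T:ℝ)+1) ≤ |zsum M s (T+1) ω|} ≤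
      ENNReal.ofReal (4 / (ε^4 * ((T:ℝ)+1)^2)) := by
    intro T
    have h := P_cheb hP s hε (T := T+1) (Nat.le_add_left 1 T)
    have hc : ((T+1:ℕ):ℝ) = (T:ℝ)+1 := by push_cast; ring
    rw [hc] at h
    exact h
  refine ne_top_of_le_ne_top ?_ (ENNReal.tsum_le_tsum hbound)
  rw [← ENNReal.ofReal_tsum_of_nonneg (fun T => by positivity) hsum]
  exact ENNReal.ofReal_ne_top

lemma null_notEnabled (hP : IsInduced M σ M.init P) :
    P {ω : RunSp S A | ∃ t, (ω t).2 ∉ M.act (ω t).1} = 0 := by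
  have : {ω : RunSp S A | ∃ t, (ω t).2 ∉ M.act (ω t).1} =
      ⋃ t : ℕ, {ω : RunSp S A | (ω t).2 ∉ M.act (ω t).1} := by
    ext ω; simp
  rw [this]
  refine measure_iUnion_null fun t => ?_
  have hset : {ω : RunSp S A | (ω t).2 ∉ M.act (ω t).1} =
      ⋃ v ∈ Finset.univ.filter (fun v : Traj S A t => (extT v t).2 ∉ M.act (extT v t).1),
        cylT v := by
    ext ω
    simp only [Set.mem_setOf_eq, Set.mem_iUnion, Finset.mem_filter, Finset.mem_univ,
      true_and, exists_prop]
    constructor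
    · intro h
      refine ⟨fun i : Fin (t+1) => ω i, ?_, mem_cylT.mpr fun i => rfl⟩
      rwa [extT_eq _ (le_refl t)]
    · rintro ⟨v, hv, hcyl⟩
      have := hcyl t (le_refl t)
      rw [this]
      exact hv
  rw [hset]
  refine measure_biUnion_null_iff ?_ |>.mpr ?_
  · exact (Finset.univ.filter _).countable_toSet
  · intro v hv
    have hv : (extT v t).2 ∉ M.act (extT v t).1 := by
      have h2 : v ∈ Finset.univ.filter
          (fun v : Traj S A t => (extT v t).2 ∉ M.act (extT v t).1) := hv
      exact (Finset.mem_filter.mp h2).2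
    rw [P_cylT hP]
    unfold Phi
    have hz : σ.choose ((List.range t).map (extT v)) (extT v t).1 (extT v t).2 = 0 := by
      by_contra h
      exact hv (σ.supp _ _ _ h)
    rw [Finset.prod_eq_zero (f := fun i => σ.choose ((List.range i).map (extT v)) (extT v i).1 (extT v i).2) (Finset.self_mem_range_succ t) hz]
    simp

/-- Existence of a run in `R` that is enabled everywhere and satisfies the
strong law for all one-step martingale averages. -/
lemma exists_good_run (hP : IsInduced M σ M.init P) {R : Set (RunSp S A)}
    (hpos : 0 < P R) :
    ∃ ω ∈ R, (∀ t, (ω t).2 ∈ M.act (ω t).1) ∧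
      ∀ s : S, Filter.Tendsto (fun T => zsum M s T ω / T) atTop (nhds 0) := by
  set N : Set (RunSp S A) := {ω | ∃ t, (ω t).2 ∉ M.act (ω t).1} ∪
    ⋃ (s : S) (k : ℕ), Filter.limsup
      (fun T : ℕ => {ω : RunSp S A | (1/((k:ℝ)+1)) * (T+1) ≤ |zsum M s (T+1) ω|}) atTop
    with hN
  have hNnull : P N = 0 := by
    rw [hN]
    refine measure_union_null (null_notEnabled hP) ?_
    refine measure_iUnion_null fun s => measure_iUnion_null fun k => ?_
    exact null_limsup_zsum hP s (by positivity)
  have hRN : P (R \ N) = P R := measure_diff_null hNnull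
  have hne : (R \ N).Nonempty := by
    refine nonempty_of_measure_ne_zero (μ := P) ?_
    rw [hRN]; exact hpos.ne'
  obtain ⟨ω, hωR, hωN⟩ := hne
  rw [hN] at hωN
  refine ⟨ω, hωR, ?_, ?_⟩
  · intro t
    by_contra h
    exact hωN (Set.mem_union_left _ ⟨t, h⟩)
  · intro s
    have hk : ∀ k : ℕ, ∀ᶠ T : ℕ in atTop,
        ¬ ((1/((k:ℝ)+1)) * ((T:ℝ)+1) ≤ |zsum M s (T+1) ω|) := by
      intro k
      have hnotin : ω ∉ Filter.limsup
          (fun T : ℕ => {ω : RunSp S A | (1/((k:ℝ)+1)) * ((T:ℝ)+1) ≤ |zsum M s (T+1) ω|})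
          atTop := by
        intro hmem
        exact hωN (Set.mem_union_right _ (Set.mem_iUnion.mpr ⟨s, Set.mem_iUnion.mpr ⟨k, hmem⟩⟩))
      rw [Filter.mem_limsup_iff_frequently_mem, Filter.not_frequently] at hnotin
      exact hnotin.mono fun T hT => by simpa using hT
    rw [Metric.tendsto_atTop]
    intro ε hε
    obtain ⟨k, hkε⟩ := exists_nat_one_div_lt hε
    obtain ⟨N0, hN0⟩ := (Filter.eventually_atTop).mp (hk k)
    refine ⟨N0 + 1, fun n hn => ?_⟩
    obtain ⟨T, rfl⟩ : ∃ T, n = T + 1 := ⟨n - 1, by omega⟩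
    have hT : T ≥ N0 := by omega
    have := hN0 T hT
    push_neg at this
    have hTpos : (0:ℝ) < (T:ℝ) + 1 := by positivity
    rw [Real.dist_eq, sub_zero]
    have habs : |zsum M s (T+1) ω / ((T:ℝ)+1)| = |zsum M s (T+1) ω| / ((T:ℝ)+1) := by
      rw [abs_div, abs_of_pos hTpos]
    have hcast : ((T+1 : ℕ) : ℝ) = (T:ℝ) + 1 := by push_cast; ring
    rw [hcast, habs]
    rw [div_lt_iff₀ hTpos]
    calc |zsum M s (T+1) ω| < (1/((k:ℝ)+1)) * ((T:ℝ)+1) := this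
    _ ≤ ε * ((T:ℝ)+1) := by
        have : (1/((k:ℝ)+1)) ≤ ε := le_of_lt hkε
        nlinarith
  
end BC

section RunAnalysis

variable {S A : Type} [Fintype S] [Fintype A] {M : MDP S A}

/-- The unique state in which an action is enabled. -/
def srcOf (M : MDP S A) (a : A) : S := (M.unique_src a).choose

lemma mem_act_srcOf (a : A) : a ∈ M.act (srcOf M a) := (M.unique_src a).choose_spec.1

lemma srcOf_eq {a : A} {s : S} (h : a ∈ M.act s) : srcOf M a = s :=
  ((M.unique_src a).choose_spec.2 s h).symm

lemma mem_act_iff_srcOf {a : A} {s : S} : a ∈ M.act s ↔ srcOf M a = s :=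
  ⟨srcOf_eq, fun h => h ▸ mem_act_srcOf a⟩

/-- Empirical frequency of an action in the first `T` steps of a run. -/
def freq (ω : RunSp S A) (T : ℕ) (a : A) : ℝ :=
  (∑ t ∈ Finset.range T, if (ω t).2 = a then (1:ℝ) else 0) / T

lemma freq_mem_Icc (ω : RunSp S A) (T : ℕ) :
    freq ω T ∈ Set.Icc (0 : A → ℝ) 1 := by
  constructor <;> intro a <;> unfold freq
  · simp only [Pi.zero_apply]
    positivity
  · simp only [Pi.one_apply]
    rcases Nat.eq_zero_or_pos T with h | h
    · simp [h]
    · rw [div_le_one (by exact_mod_cast h)]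
      calc (∑ t ∈ Finset.range T, if (ω t).2 = a then (1:ℝ) else 0)
          ≤ ∑ t ∈ Finset.range T, 1 := by
            refine Finset.sum_le_sum fun t _ => ?_
            split <;> norm_num
      _ = T := by simp

lemma sum_freq {ω : RunSp S A} {T : ℕ} (hT : 1 ≤ T) :
    ∑ a : A, freq ω T a = 1 := by
  unfold freq
  rw [← Finset.sum_div]
  rw [Finset.sum_comm]
  have : ∀ t ∈ Finset.range T, (∑ a : A, if (ω t).2 = a then (1:ℝ) else 0) = 1 := by
    intro t _
    rw [Finset.sum_ite_eq Finset.univ (ω t).2 (fun _ => (1:ℝ))]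
    simp
  rw [Finset.sum_congr rfl this]
  have hT0 : (T:ℝ) ≠ 0 := by positivity
  simp [hT0]

lemma freq_dot (ω : RunSp S A) (T : ℕ) (g : A → ℝ) :
    ∑ a : A, freq ω T a * g a = (∑ t ∈ Finset.range T, g (ω t).2) / T := by
  unfold freq
  have h1 : ∀ a : A, (∑ t ∈ Finset.range T, if (ω t).2 = a then (1:ℝ) else 0) / T * g a
      = (∑ t ∈ Finset.range T, if (ω t).2 = a then g a else 0) / T := by
    intro a
    rw [div_mul_eq_mul_div, Finset.sum_mul]
    congr 1
    refine Finset.sum_congr rfl fun t _ => ?_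
    split <;> simp
  rw [Finset.sum_congr rfl fun a _ => h1 a, ← Finset.sum_div]
  congr 1
  rw [Finset.sum_comm]
  refine Finset.sum_congr rfl fun t _ => ?_
  rw [Finset.sum_ite_eq Finset.univ (ω t).2 g]
  simp

lemma cesaro_eq_freq_dot {ω : RunSp S A} (hen : ∀ t, (ω t).2 ∈ M.act (ω t).1)
    (T : ℕ) (g : S → ℝ) :
    cesaro (fun t => g (ω t).1) T = ∑ a : A, freq ω T a * g (srcOf M a) := by
  rw [freq_dot]
  unfold cesaro
  congr 1
  refine Finset.sum_congr rfl fun t _ => ?_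
  rw [srcOf_eq (hen t)]

lemma act_indicator_sum {ω : RunSp S A} (hen : ∀ t, (ω t).2 ∈ M.act (ω t).1)
    (s : S) (t : ℕ) :
    (∑ a ∈ M.act s, if (ω t).2 = a then (1:ℝ) else 0) =
      if (ω t).1 = s then (1:ℝ) else 0 := by
  rw [Finset.sum_ite_eq (M.act s) (ω t).2 (fun _ => (1:ℝ))]
  have : (ω t).2 ∈ M.act s ↔ (ω t).1 = s := by
    rw [mem_act_iff_srcOf, srcOf_eq (hen t)]
  simp only [this]

lemma sum_act_freq {ω : RunSp S A} (hen : ∀ t, (ω t).2 ∈ M.act (ω t).1)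
    (s : S) (T : ℕ) :
    ∑ a ∈ M.act s, freq ω T a =
      (∑ t ∈ Finset.range T, if (ω t).1 = s then (1:ℝ) else 0) / T := by
  unfold freq
  rw [← Finset.sum_div]
  congr 1
  rw [Finset.sum_comm]
  exact Finset.sum_congr rfl fun t _ => act_indicator_sum hen s t

/-- Empirical flow-conservation error bound along a run. -/
lemma flow_error {ω : RunSp S A} (hen : ∀ t, (ω t).2 ∈ M.act (ω t).1)
    (s : S) {T : ℕ} (hT : 1 ≤ T) :
    |∑ a : A, freq ω T a * (M.trans a s).toReal - ∑ a ∈ M.act s, freq ω T a| ≤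
      (1 + |zsum M s T ω|) / T := by
  have hT0 : (0:ℝ) < T := by exact_mod_cast hT
  rw [freq_dot, sum_act_freq hen s T]
  set h : ℕ → ℝ := fun t => if (ω t).1 = s then (1:ℝ) else 0 with hh
  have hdz : ∀ t, (M.trans (ω t).2 s).toReal = h (t+1) - dZ M s t ω := by
    intro t; rw [hh]; unfold dZ; ring
  have hsum : ∑ t ∈ Finset.range T, (M.trans (ω t).2 s).toReal =
      (∑ t ∈ Finset.range T, h (t+1)) - zsum M s T ω := by
    rw [Finset.sum_congr rfl fun t _ => hdz t, Finset.sum_sub_distrib]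
    rfl
  have hshift : ∑ t ∈ Finset.range T, h (t+1) =
      (∑ t ∈ Finset.range T, h t) - h 0 + h T := by
    have h1 : ∑ t ∈ Finset.range (T+1), h t = h 0 + ∑ t ∈ Finset.range T, h (t+1) := by
      rw [Finset.sum_range_succ' h T]; ring
    have h2 : ∑ t ∈ Finset.range (T+1), h t = (∑ t ∈ Finset.range T, h t) + h T :=
      Finset.sum_range_succ h T
    linarith
  rw [hsum, hshift]
  have hb : ∀ t, 0 ≤ h t ∧ h t ≤ 1 := by
    intro t; rw [hh]; constructor <;> simp <;> split <;> norm_num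
  have e1 := (hb 0).1; have e2 := (hb 0).2; have e3 := (hb T).1; have e4 := (hb T).2
  rw [div_sub_div_same, abs_div, abs_of_pos hT0, div_le_div_iff_of_pos_right hT0]
  have : (∑ t ∈ Finset.range T, h t) - h 0 + h T - zsum M s T ω -
      (∑ t ∈ Finset.range T, h t) = (h T - h 0) - zsum M s T ω := by ring
  rw [this]
  have habs := abs_sub (h T - h 0) (zsum M s T ω)
  have : |h T - h 0| ≤ 1 := by rw [abs_le]; constructor <;> linarith
  calc |(h T - h 0) - zsum M s T ω| ≤ |h T - h 0| + |zsum M s T ω| := abs_sub _ _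
  _ ≤ 1 + |zsum M s T ω| := by linarith

end RunAnalysis

section Limits

/-- A bounded real sequence has a subsequence converging to its `limsup`. -/
lemma exists_subseq_tendsto_limsup {u : ℕ → ℝ} {C : ℝ} (hC : ∀ n, |u n| ≤ C) :
    ∃ φ : ℕ → ℕ, StrictMono φ ∧
      Filter.Tendsto (u ∘ φ) atTop (nhds (Filter.limsup u atTop)) := by
  set L := Filter.limsup u atTop with hL
  have hbdd : Filter.IsBoundedUnder (· ≤ ·) atTop u :=
    Filter.isBoundedUnder_of ⟨C, fun n => (abs_le.mp (hC n)).2⟩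
  have hcob : Filter.IsCoboundedUnder (· ≤ ·) atTop u :=
    Filter.IsCoboundedUnder.of_frequently_ge
      (Filter.Frequently.of_forall fun n => (abs_le.mp (hC n)).1)
  have hfreq : ∀ l : ℕ, ∃ᶠ T in atTop, |u T - L| < 1/((l:ℝ)+1) := by
    intro l
    have hδ : (0:ℝ) < 1/((l:ℝ)+1) := by positivity
    have h1 : ∀ᶠ T in atTop, u T < L + 1/((l:ℝ)+1) :=
      Filter.eventually_lt_of_limsup_lt (by linarith) hbdd
    have h2 : ∃ᶠ T in atTop, L - 1/((l:ℝ)+1) < u T :=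
      Filter.frequently_lt_of_lt_limsup hcob (by linarith)
    refine (h2.and_eventually h1).mono fun T ⟨hT1, hT2⟩ => ?_
    rw [abs_lt]; constructor <;> linarith
  obtain ⟨φ, hφmono, hφ⟩ := Filter.extraction_forall_of_frequently hfreq
  refine ⟨φ, hφmono, ?_⟩
  rw [Metric.tendsto_atTop]
  intro ε hε
  obtain ⟨k, hk⟩ := exists_nat_one_div_lt hε
  refine ⟨k, fun l hl => ?_⟩
  rw [Real.dist_eq]
  calc |u (φ l) - L| < 1/((l:ℝ)+1) := hφ l
  _ ≤ 1/((k:ℝ)+1) := by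
      have : ((k:ℝ)+1) ≤ ((l:ℝ)+1) := by
        have : (k:ℝ) ≤ l := by exact_mod_cast hl
        linarith
      apply div_le_div_of_nonneg_left (by norm_num) (by positivity) this
  _ < ε := hk

/-- The limit of a subsequence is at least the `liminf`. -/
lemma liminf_le_of_subseq {u : ℕ → ℝ} {C : ℝ} (hC : ∀ n, |u n| ≤ C)
    {φ : ℕ → ℕ} (hφ : Filter.Tendsto φ atTop atTop) {l : ℝ}
    (h : Filter.Tendsto (u ∘ φ) atTop (nhds l)) :
    Filter.liminf u atTop ≤ l := by
  have hbdd : Filter.IsBoundedUnder (· ≥ ·) atTop u :=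
    Filter.isBoundedUnder_of ⟨-C, fun n => (abs_le.mp (hC n)).1⟩
  refine le_of_forall_pos_le_add fun ε hε => ?_
  by_contra hcon
  push_neg at hcon
  have hfreq : ∀ᶠ T in atTop, l + ε < u T :=
    Filter.eventually_lt_of_lt_liminf hcon hbdd
  have : ∀ᶠ T in atTop, l + ε ≤ u (φ T) := (hφ.eventually hfreq).mono fun T hT => le_of_lt hT
  have := ge_of_tendsto h this
  linarith

lemma Cmp.rel_mono {c : Cmp} {x y v : ℝ} (h : c.rel x v) (hxy : x ≤ y) : c.rel y v := by
  cases c <;> unfold Cmp.rel at * <;> linarith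

end Limits

section Assembly

variable {S A : Type} [Fintype S] [Fintype A] {M : MDP S A}

lemma abs_cesaro_le {f : ℕ → ℝ} {B : ℝ} (hB : 0 ≤ B) (hf : ∀ t, |f t| ≤ B) (T : ℕ) :
    |cesaro f T| ≤ B := by
  unfold cesaro
  rcases Nat.eq_zero_or_pos T with h | h
  · simp [h, hB]
  · have hT0 : (0:ℝ) < T := by exact_mod_cast h
    rw [abs_div, abs_of_pos hT0, div_le_iff₀ hT0]
    calc |∑ t ∈ Finset.range T, f t| ≤ ∑ t ∈ Finset.range T, |f t| :=
          Finset.abs_sum_le_sum_abs _ _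
    _ ≤ ∑ t ∈ Finset.range T, B := Finset.sum_le_sum fun t _ => hf t
    _ = B * T := by simp [mul_comm]

lemma abs_state_le (g : S → ℝ) (s : S) : |g s| ≤ ∑ s' : S, |g s'| :=
  Finset.single_le_sum (f := fun s' => |g s'|) (fun s' _ => abs_nonneg _)
    (Finset.mem_univ s)

lemma sum_act_eq_sum_srcOf (x : A → ℝ) (g : S → ℝ) :
    ∑ s : S, ∑ a ∈ M.act s, x a * g s = ∑ a : A, x a * g (srcOf M a) := by
  have hact : ∀ s : S, M.act s = Finset.univ.filter (fun a => srcOf M a = s) := by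
    intro s
    ext a
    simp [mem_act_iff_srcOf]
  have h1 : ∀ s : S, ∑ a ∈ M.act s, x a * g s =
      ∑ a ∈ Finset.univ.filter (fun a => srcOf M a = s), x a * g (srcOf M a) := by
    intro s
    rw [hact s]
    refine Finset.sum_congr rfl fun a ha => ?_
    rw [(Finset.mem_filter.mp ha).2]
  rw [Finset.sum_congr rfl fun s _ => h1 s]
  exact Finset.sum_fiberwise Finset.univ (fun a => srcOf M a) (fun a => x a * g (srcOf M a))

/-- Construction of one solution vector from a good run. -/
lemma good_run_gives_vector {ω : RunSp S A}
    (hen : ∀ t, (ω t).2 ∈ M.act (ω t).1)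
    (hZ : ∀ s : S, Filter.Tendsto (fun T => zsum M s T ω / T) atTop (nhds 0))
    (q : S → ℝ) :
    ∃ x : A → ℝ, (∀ a, 0 ≤ x a) ∧ (∑ a : A, x a = 1) ∧
      (∀ s : S, ∑ a : A, x a * (M.trans a s).toReal = ∑ a ∈ M.act s, x a) ∧
      (∑ a : A, x a * q (srcOf M a) =
        Filter.limsup (cesaro (fun t => q (ω t).1)) atTop) ∧
      (∀ r : S → ℝ, Filter.liminf (cesaro (fun t => r (ω t).1)) atTop ≤
        ∑ a : A, x a * r (srcOf M a)) := by
  set c : ℕ → ℝ := cesaro (fun t => q (ω t).1) with hc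
  have hcb : ∀ T, |c T| ≤ ∑ s' : S, |q s'| := fun T =>
    abs_cesaro_le (Finset.sum_nonneg fun s' _ => abs_nonneg _)
      (fun t => abs_state_le q (ω t).1) T
  obtain ⟨φ, hφmono, hφlim⟩ := exists_subseq_tendsto_limsup hcb
  obtain ⟨x, hxmem, ψ, hψmono, hψlim⟩ :=
    (isCompact_Icc (a := (0 : A → ℝ)) (b := 1)).tendsto_subseq
      (x := fun l => freq ω (φ l)) (fun l => freq_mem_Icc ω (φ l))
  set θ : ℕ → ℕ := φ ∘ ψ with hθ
  have hθmono : StrictMono θ := hφmono.comp hψmono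
  have hθtop : Filter.Tendsto θ atTop atTop := hθmono.tendsto_atTop
  have hθ1 : ∀ᶠ l in atTop, 1 ≤ θ l := hθtop.eventually (Filter.eventually_ge_atTop 1)
  have hfreqlim : ∀ a : A, Filter.Tendsto (fun l => freq ω (θ l) a) atTop (nhds (x a)) :=
    fun a => (tendsto_pi_nhds.mp hψlim) a
  have hdot : ∀ g : S → ℝ, Filter.Tendsto (fun l => cesaro (fun t => g (ω t).1) (θ l))
      atTop (nhds (∑ a : A, x a * g (srcOf M a))) := by
    intro g
    have : ∀ l, cesaro (fun t => g (ω t).1) (θ l) =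
        ∑ a : A, freq ω (θ l) a * g (srcOf M a) := fun l => cesaro_eq_freq_dot hen (θ l) g
    rw [funext this]
    exact tendsto_finset_sum _ fun a _ => (hfreqlim a).mul_const _
  refine ⟨x, fun a => hxmem.1 a, ?_, ?_, ?_, ?_⟩
  · -- sums to one
    have hsum1 : Filter.Tendsto (fun l => ∑ a : A, freq ω (θ l) a) atTop
        (nhds (∑ a : A, x a)) := tendsto_finset_sum _ fun a _ => hfreqlim a
    have heq : ∀ᶠ l in atTop, ∑ a : A, freq ω (θ l) a = 1 :=
      hθ1.mono fun l hl => sum_freq hl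
    exact tendsto_nhds_unique (hsum1.congr' heq) tendsto_const_nhds
  · -- flow conservation
    intro s
    have hdiff : Filter.Tendsto (fun l => ∑ a : A, freq ω (θ l) a * (M.trans a s).toReal -
        ∑ a ∈ M.act s, freq ω (θ l) a) atTop
        (nhds (∑ a : A, x a * (M.trans a s).toReal - ∑ a ∈ M.act s, x a)) := by
      refine Filter.Tendsto.sub ?_ ?_
      · exact tendsto_finset_sum _ fun a _ => (hfreqlim a).mul_const _
      · exact tendsto_finset_sum _ fun a _ => hfreqlim a
    have hzero : Filter.Tendsto (fun l => ∑ a : A, freq ω (θ l) a * (M.trans a s).toReal -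
        ∑ a ∈ M.act s, freq ω (θ l) a) atTop (nhds 0) := by
      have hub : Filter.Tendsto (fun l => 1/((θ l : ℝ)) + |zsum M s (θ l) ω / (θ l)|)
          atTop (nhds 0) := by
        have h1 : Filter.Tendsto (fun T : ℕ => 1/((T:ℝ))) atTop (nhds 0) :=
          tendsto_one_div_atTop_nhds_zero_nat
        have h2 : Filter.Tendsto (fun T : ℕ => |zsum M s T ω / T|) atTop (nhds 0) := by
          have := (hZ s).abs
          simpa using this
        have := (h1.comp hθtop).add (h2.comp hθtop)
        simpa using this
      refine squeeze_zero_norm' ?_ hub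
      refine hθ1.mono fun l hl => ?_
      have hT0 : (0:ℝ) < (θ l : ℝ) := by exact_mod_cast hl
      have := flow_error hen s hl
      rw [Real.norm_eq_abs]
      calc |∑ a : A, freq ω (θ l) a * (M.trans a s).toReal -
            ∑ a ∈ M.act s, freq ω (θ l) a| ≤ (1 + |zsum M s (θ l) ω|) / (θ l) := this
      _ = 1/((θ l : ℝ)) + |zsum M s (θ l) ω / (θ l)| := by
          rw [abs_div, abs_of_pos hT0]
          ring
    have := tendsto_nhds_unique hdiff hzero
    linarith [this]
  · -- the sup payoff value equals the limsup
    have hclim : Filter.Tendsto (fun l => c (θ l)) atTop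
        (nhds (Filter.limsup c atTop)) := by
      have : (fun l => c (θ l)) = (c ∘ φ) ∘ ψ := rfl
      rw [this]
      exact hφlim.comp hψmono.tendsto_atTop
    exact tendsto_nhds_unique (hdot q) hclim
  · -- liminf bounds
    intro r
    have hrb : ∀ T, |cesaro (fun t => r (ω t).1) T| ≤ ∑ s' : S, |r s'| := fun T =>
      abs_cesaro_le (Finset.sum_nonneg fun s' _ => abs_nonneg _)
        (fun t => abs_state_le r (ω t).1) T
    exact liminf_le_of_subseq hrb hθtop (hdot r)

end Assembly

/-- Proposition 3 (⇒ direction): a strategy satisfying the acceptance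
condition on a set of runs of positive probability yields a nonnegative
solution of the linear constraint system `L`. -/
theorem strategy_gives_lp_solution {S A : Type} [Fintype S] [Fintype A]
    (M : MDP S A) (hsc : StronglyConnected M) (acc : GBMP S) (hn : 1 ≤ acc.n)
    (σ : Strategy M) (P : Measure (RunSp S A)) (hP : IsInduced M σ M.init P)
    (R : Set (RunSp S A)) (hmeas : MeasurableSet R) (hpos : 0 < P R)
    (hsat : ∀ ω ∈ R, acc.sat ω) :
    ∃ x : Fin acc.n → A → ℝ,
      (∀ i a, 0 ≤ x i a) ∧
      (∀ i, ∑ a : A, x i a = 1) ∧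
      (∀ i (s : S),
        ∑ a : A, x i a * (M.trans a s).toReal = ∑ a ∈ M.act s, x i a) ∧
      (∀ i (j : Fin acc.m),
        (acc.cinf j).rel (∑ s : S, ∑ a ∈ M.act s, x i a * (acc.rinf j s : ℝ))
          (acc.vinf j : ℝ)) ∧
      (∀ i : Fin acc.n,
        (acc.csup i).rel (∑ s : S, ∑ a ∈ M.act s, x i a * (acc.rsup i s : ℝ))
          (acc.vsup i : ℝ)) := by
  obtain ⟨ω, hωR, hen, hZ⟩ := exists_good_run hP hpos
  obtain ⟨-, hinf, hsup⟩ := hsat ω hωR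
  have key : ∀ i : Fin acc.n, ∃ x : A → ℝ, (∀ a, 0 ≤ x a) ∧ (∑ a : A, x a = 1) ∧
      (∀ s : S, ∑ a : A, x a * (M.trans a s).toReal = ∑ a ∈ M.act s, x a) ∧
      (∀ j : Fin acc.m,
        (acc.cinf j).rel (∑ a : A, x a * (acc.rinf j (srcOf M a) : ℝ)) (acc.vinf j : ℝ)) ∧
      (acc.csup i).rel (∑ a : A, x a * (acc.rsup i (srcOf M a) : ℝ)) (acc.vsup i : ℝ) := by
    intro i
    obtain ⟨x, h0, h1, h2, h3, h4⟩ :=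
      good_run_gives_vector hen hZ (fun s => (acc.rsup i s : ℝ))
    refine ⟨x, h0, h1, h2, ?_, ?_⟩
    · intro j
      have hrel := hinf j
      have hlr : lr .inf (fun t => (acc.rinf j (ω t).1 : ℝ)) =
          Filter.liminf (cesaro (fun t => ((acc.rinf j (ω t).1 : ℚ) : ℝ))) Filter.atTop := rfl
      rw [hlr] at hrel
      exact Cmp.rel_mono hrel (h4 (fun s => (acc.rinf j s : ℝ)))
    · have hrel := hsup i
      have hlr : lr .sup (fun t => (acc.rsup i (ω t).1 : ℝ)) =
          Filter.limsup (cesaro (fun t => ((acc.rsup i (ω t).1 : ℚ) : ℝ))) Filter.atTop := rfl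
      rw [hlr] at hrel
      rw [h3]
      exact hrel
  choose x h0 h1 h2 h3 h4 using key
  refine ⟨x, h0, h1, h2, ?_, ?_⟩
  · intro i j
    rw [sum_act_eq_sum_srcOf]
    exact h3 i j
  · intro i
    rw [sum_act_eq_sum_srcOf]
    exact h4 i

end Paper

end
end

section
/- Let φ be an fLTL formula, w an infinite word over 2^{Ap}, and φ_0φ_1φ_2⋯ the master run of φ on w, defined by φ_0 = φ and φ_{n+1} = (Unf(φ_n))[w[n]]. Then for all n ∈ ℕ: w ⊨ φ if and only if w^n ⊨ φ_n. -/
open Filter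

attribute [local instance] Classical.propDecidable

noncomputable section

namespace Paper

/-- Real-valued indicator of a proposition. -/
def ind (P : Prop) : ℝ := if P then 1 else 0

/-- Formulas of frequency LTL (fLTL) over atomic propositions `Ap`,
in negation normal form. -/
inductive FLTL (Ap : Type) where
  | tt : FLTL Ap
  | ff : FLTL Ap
  | atom (a : Ap) : FLTL Ap
  | natom (a : Ap) : FLTL Ap
  | conj (φ ψ : FLTL Ap) : FLTL Ap
  | disj (φ ψ : FLTL Ap) : FLTL Ap
  | next (φ : FLTL Ap) : FLTL Ap
  | fut (φ : FLTL Ap) : FLTL Ap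
  | glob (φ : FLTL Ap) : FLTL Ap
  | untl (φ ψ : FLTL Ap) : FLTL Ap
  | freq (e : Ext) (c : Cmp) (p : ℚ) (φ : FLTL Ap) : FLTL Ap

/-- Infinite words over the alphabet `2^Ap`. -/
abbrev Word (Ap : Type) := ℕ → Set Ap

/-- The suffix `w^k` of an infinite word. -/
def suffixW {Ap : Type} (w : Word Ap) (k : ℕ) : Word Ap := fun i => w (k + i)

/-- Semantics of fLTL: `Sat φ w` means `w ⊨ φ`. -/
def Sat {Ap : Type} : FLTL Ap → Word Ap → Prop
  | .tt, _ => True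
  | .ff, _ => False
  | .atom a, w => a ∈ w 0
  | .natom a, w => a ∉ w 0
  | .conj φ ψ, w => Sat φ w ∧ Sat ψ w
  | .disj φ ψ, w => Sat φ w ∨ Sat ψ w
  | .next φ, w => Sat φ (suffixW w 1)
  | .fut φ, w => ∃ k, Sat φ (suffixW w k)
  | .glob φ, w => ∀ k, Sat φ (suffixW w k)
  | .untl φ ψ, w => ∃ k, Sat ψ (suffixW w k) ∧ ∀ j < k, Sat φ (suffixW w j)
  | .freq e c p φ, w => c.rel (lr e (fun i => ind (Sat φ (suffixW w i)))) (p : ℝ)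

/-- `U`-free formulas (the grammar `ξ` of the fragment). -/
def UFree {Ap : Type} : FLTL Ap → Prop
  | .conj φ ψ => UFree φ ∧ UFree ψ
  | .disj φ ψ => UFree φ ∧ UFree ψ
  | .next φ => UFree φ
  | .fut φ => UFree φ
  | .glob φ => UFree φ
  | .freq _ _ _ φ => UFree φ
  | .untl _ _ => False
  | _ => True

/-- The fragment fLTL∖GU: no `U` inside the scope of `G` or `G^{⋈p}_ext`. -/
def InFrag {Ap : Type} : FLTL Ap → Prop
  | .conj φ ψ => InFrag φ ∧ InFrag ψ
  | .disj φ ψ => InFrag φ ∧ InFrag ψ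
  | .next φ => InFrag φ
  | .fut φ => InFrag φ
  | .untl φ ψ => InFrag φ ∧ InFrag ψ
  | .glob φ => UFree φ
  | .freq _ _ _ φ => UFree φ
  | _ => True

/-- One-step unfolding `Unf`. -/
def unf {Ap : Type} : FLTL Ap → FLTL Ap
  | .conj φ ψ => .conj (unf φ) (unf ψ)
  | .disj φ ψ => .disj (unf φ) (unf ψ)
  | .fut φ => .disj (unf φ) (.next (.fut φ))
  | .glob φ => .conj (unf φ) (.next (.glob φ))
  | .untl φ ψ => .disj (unf ψ) (.conj (unf φ) (.next (.untl φ ψ)))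
  | .freq e c p φ => .conj .tt (.next (.freq e c p φ))
  | φ => φ

/-- The next-step operator `ψ[ν]` for a letter `ν ⊆ Ap`. -/
def step {Ap : Type} : FLTL Ap → Set Ap → FLTL Ap
  | .conj φ ψ, ν => .conj (step φ ν) (step ψ ν)
  | .disj φ ψ, ν => .disj (step φ ν) (step ψ ν)
  | .atom a, ν => if a ∈ ν then .tt else .ff
  | .natom a, ν => if a ∈ ν then .ff else .tt
  | .next φ, _ => φ
  | φ, _ => φ

/-- Non-Boolean formulas: those that are not conjunctions or disjunctions. -/
def nonBool {Ap : Type} : FLTL Ap → Prop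
  | .conj _ _ => False
  | .disj _ _ => False
  | _ => True

/-- Extension of a propositional assignment (on non-Boolean formulas)
through conjunction and disjunction; `tt` and `ff` get their truth values. -/
def evalA {Ap : Type} (A : FLTL Ap → Prop) : FLTL Ap → Prop
  | .tt => True
  | .ff => False
  | .conj φ ψ => evalA A φ ∧ evalA A ψ
  | .disj φ ψ => evalA A φ ∨ evalA A ψ
  | φ => A φ

/-- Propositional provability `Φ ⊢ ψ`. -/
def pproves {Ap : Type} (Φ : Set (FLTL Ap)) (ψ : FLTL Ap) : Prop :=
  ∀ A : FLTL Ap → Prop, (∀ χ ∈ Φ, evalA A χ) → evalA A ψ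

/-- Propositional equivalence `≡_P`. -/
def pequiv {Ap : Type} (φ ψ : FLTL Ap) : Prop :=
  pproves {φ} ψ ∧ pproves {ψ} φ

/-- The set of subformulas of a formula (including itself). -/
def subf {Ap : Type} : FLTL Ap → Set (FLTL Ap)
  | .conj φ ψ => insert (.conj φ ψ) (subf φ ∪ subf ψ)
  | .disj φ ψ => insert (.disj φ ψ) (subf φ ∪ subf ψ)
  | .next φ => insert (.next φ) (subf φ)
  | .fut φ => insert (.fut φ) (subf φ)
  | .glob φ => insert (.glob φ) (subf φ)
  | .untl φ ψ => insert (.untl φ ψ) (subf φ ∪ subf ψ)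
  | .freq e c p φ => insert (.freq e c p φ) (subf φ)
  | φ => {φ}

/-- `sf(φ)`: the set of non-Boolean subformulas of `φ`. -/
def sfSet {Ap : Type} (φ : FLTL Ap) : Set (FLTL Ap) := {ψ ∈ subf φ | nonBool ψ}

/-- Formulas of the shapes `Fξ`, `Gξ`, `G^{⋈p}_ext ξ`. -/
def isRecShape {Ap : Type} : FLTL Ap → Prop
  | .fut _ => True
  | .glob _ => True
  | .freq _ _ _ _ => True
  | _ => False

/-- `Rec`: the set of `F`-, `G`-, and `G^{⋈p}_ext`-subformulas of `φ`. -/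
def RecSet {Ap : Type} (φ : FLTL Ap) : Set (FLTL Ap) := {ψ ∈ subf φ | isRecShape ψ}

/-- The defining condition of membership in `R(w)`. -/
def RsatCond {Ap : Type} (w : Word Ap) : FLTL Ap → Prop
  | .fut ξ => Sat (.glob (.fut ξ)) w
  | .glob ξ => Sat (.fut (.glob ξ)) w
  | .freq e c p ξ => Sat (.freq e c p ξ) w
  | _ => False

/-- `R(w)`: elements of `Rec` eventually always satisfied on `w`. -/
def Rsat {Ap : Type} (φ : FLTL Ap) (w : Word Ap) : Set (FLTL Ap) :=
  {ψ ∈ RecSet φ | RsatCond w ψ}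

/-- The threshold `T(w)`: the smallest `T` such that for all `t ≥ T` every
formula of `R(w)` holds at `w^t` and every formula of `Rec ∖ R(w)` fails at `w^t`. -/
def threshold {Ap : Type} (φ : FLTL Ap) (w : Word Ap) : ℕ :=
  sInf {T : ℕ | ∀ t, T ≤ t →
    (∀ ψ ∈ Rsat φ w, Sat ψ (suffixW w t)) ∧
    (∀ ψ ∈ RecSet φ, ψ ∉ Rsat φ w → ¬ Sat ψ (suffixW w t))}

/-- Sinks of slave transition systems: `ψ[ν] = ψ` for every letter `ν`. -/
def isSink {Ap : Type} (ψ : FLTL Ap) : Prop := ∀ ν : Set Ap, step ψ ν = ψ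

/-- Run of the slave LTS `S(ξ)` on a finite word: undefined (`none`) as soon as
a transition from a sink would be needed. -/
def slaveRunList {Ap : Type} : FLTL Ap → List (Set Ap) → Option (FLTL Ap)
  | ψ, [] => some ψ
  | ψ, ν :: rest => if isSink ψ then none else slaveRunList (step ψ ν) rest

/-- The finite word `w[i] w[i+1] ⋯ w[i+len-1]`. -/
def segWord {Ap : Type} (w : Word Ap) (i len : ℕ) : List (Set Ap) :=
  (List.range len).map (fun k => w (i + k))

/-- `S(ξ)(w[i..j])`: the state of the slave LTS after reading `w[i]⋯w[j]`. -/
def readSeg {Ap : Type} (ξ : FLTL Ap) (w : Word Ap) (i j : ℕ) : Option (FLTL Ap) :=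
  slaveRunList ξ (segWord w i (j + 1 - i))

/-- The state, at time `n`, of the slave token born at time `b`
(having read `w[b]⋯w[n-1]`). -/
def tokState {Ap : Type} (ξ : FLTL Ap) (w : Word Ap) (b n : ℕ) : Option (FLTL Ap) :=
  slaveRunList ξ (segWord w b (n - b))

/-- `Sat(R)`: positions from which the slave run reaches an `R`-provable state. -/
def SatSet {Ap : Type} (R : Set (FLTL Ap)) (ξ : FLTL Ap) (w : Word Ap) : Set ℕ :=
  {i | ∃ j ≥ i, ∃ ψ, readSeg ξ w i j = some ψ ∧ pproves R ψ}

/-- The token (subset-construction) run of the slave automata for `ξ` on `w`: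
at each step all non-sink tokens move and a fresh token is put on `ξ`. -/
def tokenSet {Ap : Type} (ξ : FLTL Ap) (w : Word Ap) : ℕ → Set (FLTL Ap)
  | 0 => {ξ}
  | n + 1 => insert ξ ((fun ψ => step ψ (w n)) '' {ψ ∈ tokenSet ξ w n | ¬ isSink ψ})

/-- Acceptance of the Büchi slave automaton `S_GF(ξ,R)`:
infinitely often some token lies in an accepting (R-provable) sink. -/
def buchiAcc {Ap : Type} (R : Set (FLTL Ap)) (ξ : FLTL Ap) (w : Word Ap) : Prop :=
  ∃ᶠ n in atTop, ∃ ψ ∈ tokenSet ξ w n, isSink ψ ∧ pproves R ψ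

/-- Acceptance of the co-Büchi slave automaton `S_FG(ξ,R)`:
only finitely often some token lies in a rejecting (non-R-provable) sink. -/
def coBuchiAcc {Ap : Type} (R : Set (FLTL Ap)) (ξ : FLTL Ap) (w : Word Ap) : Prop :=
  ∀ᶠ n in atTop, ¬ ∃ ψ ∈ tokenSet ξ w n, isSink ψ ∧ ¬ pproves R ψ

/-- The counting function (state of the mean-payoff slave automaton) at time `n`:
the number of tokens currently in state `ψ`. -/
def tokenCount {Ap : Type} (ξ : FLTL Ap) (w : Word Ap) (n : ℕ) (ψ : FLTL Ap) : ℕ :=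
  ((Finset.range (n + 1)).filter (fun b => tokState ξ w b n = some ψ)).card

/-- The reward `r(R)` of a counting state: total number of tokens in
accepting (R-provable) sinks. -/
def mpRewardFn {Ap : Type} (R : Set (FLTL Ap)) (f : FLTL Ap → ℕ) : ℝ :=
  ∑' ψ : {χ : FLTL Ap // isSink χ ∧ pproves R χ}, (f ψ.1 : ℝ)

/-- Acceptance of the mean-payoff slave automaton `S_{G^{⋈p}_ext}(ξ,R)`. -/
def mpAcc {Ap : Type} (R : Set (FLTL Ap)) (ξ : FLTL Ap) (w : Word Ap)
    (e : Ext) (c : Cmp) (p : ℚ) : Prop :=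
  c.rel (lr e (fun n => mpRewardFn R (tokenCount ξ w n))) (p : ℝ)

/-- Acceptance of the slave automaton for a formula of `Rec`, with assumptions `R`. -/
def slaveAccept {Ap : Type} (R : Set (FLTL Ap)) (w : Word Ap) : FLTL Ap → Prop
  | .fut ξ => buchiAcc R ξ w
  | .glob ξ => coBuchiAcc R ξ w
  | .freq e c p ξ => mpAcc R ξ w e c p
  | _ => True

/-- `w ∈ L(P(R))`: the product of the slaves accepts `w` with the condition
`Acc(R) = ⋀_{ξ ∈ R} Acc_ξ(R)`. -/
def productAccept {Ap : Type} (R : Set (FLTL Ap)) (w : Word Ap) : Prop :=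
  ∀ ψ ∈ R, slaveAccept R w ψ

/-- The run of the master transition system on `w`. -/
def masterRun {Ap : Type} (φ : FLTL Ap) (w : Word Ap) : ℕ → FLTL Ap
  | 0 => φ
  | n + 1 => step (unf (masterRun φ w n)) (w n)

/-- The propositional substitution `χ[X/ff]`: replace each non-Boolean
formula belonging to `X` by `ff`. -/
def substFF {Ap : Type} (X : Set (FLTL Ap)) : FLTL Ap → FLTL Ap
  | .conj φ ψ => .conj (substFF X φ) (substFF X ψ)
  | .disj φ ψ => .disj (substFF X φ) (substFF X ψ)
  | φ => if φ ∈ X then .ff else φ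

/-- The master acceptance condition `Acc_M(R)`: eventually, the current master
formula is provable from `R` together with all tokens of the slaves of
`G`-formulas of `R`, with `Rec ∖ R` substituted by `ff`. -/
def masterAcc {Ap : Type} (φ : FLTL Ap) (R : Set (FLTL Ap)) (w : Word Ap) : Prop :=
  ∀ᶠ n in atTop,
    pproves
      (R ∪ ⋃ (ξ : FLTL Ap) (_ : FLTL.glob ξ ∈ R),
        substFF (RecSet φ \ R) '' tokenSet ξ w n)
      (masterRun φ w n)

/-- `w ∈ L(A)` for the final automaton `A` (master × slave product) of `φ`. -/
def finalAccept {Ap : Type} (φ : FLTL Ap) (w : Word Ap) : Prop :=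
  ∃ R ⊆ RecSet φ, masterAcc φ R w ∧ productAccept R w

lemma suffixW_zero {Ap : Type} (w : Word Ap) : suffixW w 0 = w :=
  funext fun i => by simp [suffixW]

lemma suffixW_suffixW {Ap : Type} (w : Word Ap) (k j : ℕ) :
    suffixW (suffixW w k) j = suffixW w (k + j) :=
  funext fun i => by simp [suffixW, Nat.add_assoc]

lemma ind_nonneg (P : Prop) : 0 ≤ ind P := by unfold ind; split <;> norm_num

lemma ind_le_one (P : Prop) : ind P ≤ 1 := by unfold ind; split <;> norm_num

private lemma liminf_eq_of_sub' (u v : ℕ → ℝ) (hu0 : ∀ n, 0 ≤ u n) (hu1 : ∀ n, u n ≤ 1)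
    (hv0 : ∀ n, 0 ≤ v n) (hv1 : ∀ n, v n ≤ 1)
    (h : Tendsto (fun n => v n - u n) atTop (nhds 0)) :
    liminf u atTop = liminf v atTop := by
  have key : ∀ (a b : ℕ → ℝ), (∀ n, 0 ≤ a n) → (∀ n, a n ≤ 1) → (∀ n, 0 ≤ b n) → (∀ n, b n ≤ 1) →
      Tendsto (fun n => b n - a n) atTop (nhds 0) → liminf a atTop ≤ liminf b atTop := by
    intro a b ha0 ha1 hb0 hb1 hab
    refine le_of_forall_pos_le_add ?_
    intro ε hε
    have hev : ∀ᶠ n in atTop, a n ≤ b n + ε := by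
      filter_upwards [hab.eventually (eventually_gt_nhds (show (-ε:ℝ) < 0 by linarith))] with n hn
      linarith
    have hbb : IsBoundedUnder (· ≥ ·) atTop b := isBoundedUnder_of ⟨0, fun n => hb0 n⟩
    have hab' : IsBoundedUnder (· ≤ ·) atTop b := isBoundedUnder_of ⟨1, fun n => hb1 n⟩
    have hcb : IsCoboundedUnder (· ≥ ·) atTop b := hab'.isCoboundedUnder_ge
    have h1 : IsBoundedUnder (· ≥ ·) atTop a := isBoundedUnder_of ⟨0, fun n => ha0 n⟩
    have h2' : IsBoundedUnder (· ≤ ·) atTop (fun n => b n + ε) :=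
      isBoundedUnder_of ⟨1 + ε, fun n => by have := hb1 n; linarith⟩
    have h2 : IsCoboundedUnder (· ≥ ·) atTop (fun n => b n + ε) := h2'.isCoboundedUnder_ge
    calc liminf a atTop ≤ liminf (fun n => b n + ε) atTop := liminf_le_liminf hev h1 h2
      _ = liminf b atTop + ε := liminf_add_const atTop b ε hcb hbb
  refine le_antisymm (key u v hu0 hu1 hv0 hv1 h) (key v u hv0 hv1 hu0 hu1 ?_)
  simpa using h.neg

private lemma limsup_eq_of_sub' (u v : ℕ → ℝ) (hu0 : ∀ n, 0 ≤ u n) (hu1 : ∀ n, u n ≤ 1)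
    (hv0 : ∀ n, 0 ≤ v n) (hv1 : ∀ n, v n ≤ 1)
    (h : Tendsto (fun n => v n - u n) atTop (nhds 0)) :
    limsup u atTop = limsup v atTop := by
  have key : ∀ (a b : ℕ → ℝ), (∀ n, 0 ≤ a n) → (∀ n, a n ≤ 1) → (∀ n, 0 ≤ b n) → (∀ n, b n ≤ 1) →
      Tendsto (fun n => b n - a n) atTop (nhds 0) → limsup a atTop ≤ limsup b atTop := by
    intro a b ha0 ha1 hb0 hb1 hab
    refine le_of_forall_pos_le_add ?_
    intro ε hε
    have hev : ∀ᶠ n in atTop, a n ≤ b n + ε := by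
      filter_upwards [hab.eventually (eventually_gt_nhds (show (-ε:ℝ) < 0 by linarith))] with n hn
      linarith
    have hbb : IsBoundedUnder (· ≤ ·) atTop b := isBoundedUnder_of ⟨1, fun n => hb1 n⟩
    have hgb : IsBoundedUnder (· ≥ ·) atTop b := isBoundedUnder_of ⟨0, fun n => hb0 n⟩
    have hcb : IsCoboundedUnder (· ≤ ·) atTop b := hgb.isCoboundedUnder_le
    have h1' : IsBoundedUnder (· ≥ ·) atTop a := isBoundedUnder_of ⟨0, fun n => ha0 n⟩
    have h1 : IsCoboundedUnder (· ≤ ·) atTop a := h1'.isCoboundedUnder_le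
    have h2 : IsBoundedUnder (· ≤ ·) atTop (fun n => b n + ε) :=
      isBoundedUnder_of ⟨1 + ε, fun n => by have := hb1 n; linarith⟩
    calc limsup a atTop ≤ limsup (fun n => b n + ε) atTop := limsup_le_limsup hev h1 h2
      _ = limsup b atTop + ε := limsup_add_const atTop b ε hbb hcb
  refine le_antisymm (key u v hu0 hu1 hv0 hv1 h) (key v u hv0 hv1 hu0 hu1 ?_)
  simpa using h.neg

lemma cesaro_nonneg (q : ℕ → ℝ) (h0 : ∀ i, 0 ≤ q i) (n : ℕ) : 0 ≤ cesaro q n :=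
  div_nonneg (Finset.sum_nonneg fun i _ => h0 i) (Nat.cast_nonneg n)

lemma cesaro_le_one (q : ℕ → ℝ) (h1 : ∀ i, q i ≤ 1) (n : ℕ) : cesaro q n ≤ 1 := by
  rcases Nat.eq_zero_or_pos n with rfl | hn
  · simp [cesaro]
  · rw [cesaro, div_le_one (by exact_mod_cast hn)]
    calc ∑ j ∈ Finset.range n, q j ≤ ∑ j ∈ Finset.range n, 1 :=
          Finset.sum_le_sum fun i _ => h1 i
      _ = (n : ℝ) := by simp

lemma lr_shift (q : ℕ → ℝ) (h0 : ∀ i, 0 ≤ q i) (h1 : ∀ i, q i ≤ 1) (e : Ext) :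
    lr e (fun i => q (i + 1)) = lr e q := by
  set v := cesaro (fun i => q (i + 1)) with hv
  set u := cesaro q with hu
  have hsub : ∀ n, v n - u n = (q n - q 0) / n := by
    intro n
    have hsum : ∑ j ∈ Finset.range n, q (j + 1) = (∑ j ∈ Finset.range n, q j) + q n - q 0 := by
      have h₁ := Finset.sum_range_succ' q n
      have h₂ := Finset.sum_range_succ q n
      linarith
    rw [hv, hu]
    unfold cesaro
    rw [hsum, div_sub_div_same]
    ring_nf
  have htends : Tendsto (fun n => v n - u n) atTop (nhds 0) := by
    refine squeeze_zero_norm (a := fun n : ℕ => 1 / (n : ℝ)) (fun n => ?_)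
      tendsto_one_div_atTop_nhds_zero_nat
    rw [hsub n]
    rcases Nat.eq_zero_or_pos n with rfl | hn
    · simp
    · rw [norm_div, Real.norm_natCast, div_le_div_iff_of_pos_right (by exact_mod_cast hn)]
      have := h0 n; have := h1 n; have := h0 0; have := h1 0
      rw [Real.norm_eq_abs, abs_le]
      constructor <;> linarith
  have hu0 := cesaro_nonneg q h0
  have hu1 := cesaro_le_one q h1
  have hv0 := cesaro_nonneg (fun i => q (i + 1)) (fun i => h0 _)
  have hv1 := cesaro_le_one (fun i => q (i + 1)) (fun i => h1 _)
  cases e with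
  | inf => exact (liminf_eq_of_sub' u v hu0 hu1 hv0 hv1 htends).symm
  | sup => exact (limsup_eq_of_sub' u v hu0 hu1 hv0 hv1 htends).symm

lemma sat_freq_shift {Ap : Type} (e : Ext) (c : Cmp) (p : ℚ) (φ : FLTL Ap) (w : Word Ap) :
    Sat (.freq e c p φ) (suffixW w 1) ↔ Sat (.freq e c p φ) w := by
  show Cmp.rel c _ _ ↔ Cmp.rel c _ _
  have hfun : (fun i => ind (Sat φ (suffixW (suffixW w 1) i)))
      = fun i => ind (Sat φ (suffixW w (i + 1))) := by
    funext i
    rw [suffixW_suffixW, Nat.add_comm]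
  rw [hfun, lr_shift (fun i => ind (Sat φ (suffixW w i)))
    (fun i => ind_nonneg _) (fun i => ind_le_one _)]

lemma sat_unf {Ap : Type} (φ : FLTL Ap) (w : Word Ap) : Sat (unf φ) w ↔ Sat φ w := by
  induction φ generalizing w with
  | conj φ ψ ihφ ihψ => exact and_congr (ihφ w) (ihψ w)
  | disj φ ψ ihφ ihψ => exact or_congr (ihφ w) (ihψ w)
  | fut φ ih =>
    show Sat (unf φ) w ∨ Sat (.fut φ) (suffixW w 1) ↔ ∃ k, Sat φ (suffixW w k)
    rw [ih]
    show Sat φ w ∨ (∃ k, Sat φ (suffixW (suffixW w 1) k)) ↔ _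
    constructor
    · rintro (h | ⟨k, h⟩)
      · exact ⟨0, by rwa [suffixW_zero]⟩
      · rw [suffixW_suffixW] at h; exact ⟨1 + k, h⟩
    · rintro ⟨k, h⟩
      cases k with
      | zero => rw [suffixW_zero] at h; exact Or.inl h
      | succ k => exact Or.inr ⟨k, by rw [suffixW_suffixW, Nat.add_comm]; exact h⟩
  | glob φ ih =>
    show Sat (unf φ) w ∧ Sat (.glob φ) (suffixW w 1) ↔ ∀ k, Sat φ (suffixW w k)
    rw [ih]
    show Sat φ w ∧ (∀ k, Sat φ (suffixW (suffixW w 1) k)) ↔ _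
    constructor
    · rintro ⟨h0, hs⟩ k
      cases k with
      | zero => rwa [suffixW_zero]
      | succ k => have := hs k; rwa [suffixW_suffixW, Nat.add_comm] at this
    · intro h
      refine ⟨by have := h 0; rwa [suffixW_zero] at this, fun k => ?_⟩
      rw [suffixW_suffixW]; exact h (1 + k)
  | untl φ ψ ihφ ihψ =>
    show Sat (unf ψ) w ∨ (Sat (unf φ) w ∧ Sat (.untl φ ψ) (suffixW w 1)) ↔ _
    rw [ihφ, ihψ]
    show Sat ψ w ∨ (Sat φ w ∧ ∃ k, Sat ψ (suffixW (suffixW w 1) k)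
        ∧ ∀ j < k, Sat φ (suffixW (suffixW w 1) j)) ↔
      ∃ k, Sat ψ (suffixW w k) ∧ ∀ j < k, Sat φ (suffixW w j)
    constructor
    · rintro (h | ⟨h0, k, hψ, hφ⟩)
      · exact ⟨0, by rwa [suffixW_zero], fun j hj => absurd hj (Nat.not_lt_zero j)⟩
      · refine ⟨k + 1, by rwa [suffixW_suffixW, Nat.add_comm] at hψ, fun j hj => ?_⟩
        cases j with
        | zero => rwa [suffixW_zero]
        | succ j =>
          have := hφ j (Nat.lt_of_succ_lt_succ hj)
          rwa [suffixW_suffixW, Nat.add_comm] at this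
    · rintro ⟨k, hψ, hφ⟩
      cases k with
      | zero => rw [suffixW_zero] at hψ; exact Or.inl hψ
      | succ k =>
        refine Or.inr ⟨by have := hφ 0 (Nat.succ_pos k); rwa [suffixW_zero] at this,
          k, by rw [suffixW_suffixW, Nat.add_comm]; exact hψ, fun j hj => ?_⟩
        rw [suffixW_suffixW, Nat.add_comm]
        exact hφ (j + 1) (Nat.succ_lt_succ hj)
  | freq e c p φ ih =>
    show True ∧ Sat (.freq e c p φ) (suffixW w 1) ↔ Sat (.freq e c p φ) w
    rw [sat_freq_shift]
    exact iff_of_eq (true_and _)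
  | _ => exact Iff.rfl

lemma sat_step_unf {Ap : Type} (φ : FLTL Ap) (w : Word Ap) :
    Sat (step (unf φ) (w 0)) (suffixW w 1) ↔ Sat (unf φ) w := by
  induction φ with
  | tt => exact Iff.rfl
  | ff => exact Iff.rfl
  | atom a =>
    show Sat (if a ∈ w 0 then FLTL.tt else FLTL.ff) (suffixW w 1) ↔ a ∈ w 0
    split <;> rename_i h <;> simp [Sat, h]
  | natom a =>
    show Sat (if a ∈ w 0 then FLTL.ff else FLTL.tt) (suffixW w 1) ↔ a ∉ w 0
    split <;> rename_i h <;> simp [Sat, h]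
  | conj φ ψ ihφ ihψ => exact and_congr ihφ ihψ
  | disj φ ψ ihφ ihψ => exact or_congr ihφ ihψ
  | next φ => exact Iff.rfl
  | fut φ ih => exact or_congr ih Iff.rfl
  | glob φ ih => exact and_congr ih Iff.rfl
  | untl φ ψ ihφ ihψ => exact or_congr ihψ (and_congr ihφ Iff.rfl)
  | freq e c p φ ih => exact Iff.rfl

/-- Lemma 2 (local correctness of the master LTS): along the master run
`φ₀φ₁⋯` of `φ` on `w`, we have `w ⊨ φ` iff `w^n ⊨ φₙ` for every `n`. -/
theorem master_local_correct {Ap : Type} [Fintype Ap] (φ : FLTL Ap) (w : Word Ap)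
    (ms : ℕ → FLTL Ap) (h0 : ms 0 = φ)
    (hstep : ∀ n, ms (n + 1) = step (unf (ms n)) (w n)) :
    ∀ n : ℕ, Sat φ w ↔ Sat (ms n) (suffixW w n) := by
  intro n
  induction n with
  | zero => rw [h0, suffixW_zero]
  | succ n ih =>
    rw [hstep n]
    have h2 : w n = (suffixW w n) 0 := by simp [suffixW]
    have h1 : suffixW w (n + 1) = suffixW (suffixW w n) 1 :=
      (suffixW_suffixW w n 1).symm
    rw [h1, h2, sat_step_unf (ms n) (suffixW w n), sat_unf]
    exact ih


end Paper

end
end
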